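/- arXiv:2102.10568 — 6 statements merged into one kernel-verified Lean document; each statement's English description precedes it below -/
import Mathlib

section
/- Let G be a connected interval graph and let D_s and D_t be two dominating multisets of G with |D_s| = |D_t|. Then D_t is TS-reachable from D_s; that is, there always exists a token-sliding reconfiguration sequence of dominating multisets from D_s to D_t. -/
/-- A multiset `D` of vertices dominates `G`: every vertex occurs in `D`
or is adjacent to a vertex occurring in `D`. -/
def IsDominatingMultiset {V : Type*} (G : SimpleGraph V) (D : Multiset V) : Prop :=
  ∀ w : V, w ∈ D ∨ ∃ u ∈ D, G.Adj u w

/-- A token slide along an edge `uv`: remove one copy of `u`, add one copy of `v`. -/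
def TokenSlide {V : Type*} [DecidableEq V] (G : SimpleGraph V) (D D' : Multiset V) : Prop :=
  ∃ u v : V, G.Adj u v ∧ u ∈ D ∧ D' = v ::ₘ D.erase u

/-- One step of token-sliding reconfiguration between dominating multisets. -/
def TSStep {V : Type*} [DecidableEq V] (G : SimpleGraph V) (D D' : Multiset V) : Prop :=
  IsDominatingMultiset G D ∧ IsDominatingMultiset G D' ∧ TokenSlide G D D'

/-- `D'` is TS-reachable from `D`: there is a finite sequence of dominating multisets
from `D` to `D'` in which each multiset is obtained from the previous one by a token slide. -/
def TSReachable {V : Type*} [DecidableEq V] (G : SimpleGraph V) (D D' : Multiset V) : Prop :=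
  Relation.ReflTransGen (TSStep G) D D'

/-- `G` is an interval graph: vertices can be assigned nonempty closed real intervals
so that two distinct vertices are adjacent iff their intervals intersect. -/
def IsIntervalGraph {V : Type*} (G : SimpleGraph V) : Prop :=
  ∃ a b : V → ℝ, (∀ v, a v ≤ b v) ∧
    ∀ u v : V, u ≠ v →
      (G.Adj u v ↔ (Set.Icc (a u) (b u) ∩ Set.Icc (a v) (b v)).Nonempty)

namespace IGTS

open scoped Classical

variable {V : Type*} [Fintype V] [DecidableEq V]

/-- Closed-neighborhood relation in interval terms: intervals of `u` and `z` intersect. -/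
def cl (a b : V → ℝ) (u z : V) : Prop := a u ≤ b z ∧ a z ≤ b u

lemma cl_symm {a b : V → ℝ} {u z : V} (h : cl a b u z) : cl a b z u := ⟨h.2, h.1⟩

lemma cl_refl {a b : V → ℝ} (hab : ∀ v, a v ≤ b v) (u : V) : cl a b u u :=
  ⟨hab u, hab u⟩

section withGraph

variable (G : SimpleGraph V) (a b : V → ℝ)

lemma cl_iff (hab : ∀ v, a v ≤ b v)
    (hadj : ∀ u v : V, u ≠ v →
      (G.Adj u v ↔ (Set.Icc (a u) (b u) ∩ Set.Icc (a v) (b v)).Nonempty))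
    (u z : V) : cl a b u z ↔ (u = z ∨ G.Adj u z) := by
  constructor
  · rintro ⟨h1, h2⟩
    by_cases h : u = z
    · exact Or.inl h
    · refine Or.inr ?_
      rw [hadj u z h, Set.Icc_inter_Icc, Set.nonempty_Icc, max_le_iff, le_min_iff, le_min_iff]
      exact ⟨⟨hab u, h1⟩, h2, hab z⟩
  · rintro (rfl | h)
    · exact cl_refl hab u
    · have hne := h.ne
      rw [hadj u z hne, Set.Icc_inter_Icc, Set.nonempty_Icc, max_le_iff, le_min_iff,
        le_min_iff] at h
      exact ⟨h.1.2, h.2.1⟩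

lemma dom_of_forall_cl (hab : ∀ v, a v ≤ b v)
    (hadj : ∀ u v : V, u ≠ v →
      (G.Adj u v ↔ (Set.Icc (a u) (b u) ∩ Set.Icc (a v) (b v)).Nonempty))
    (M : Multiset V) (h : ∀ z, ∃ x ∈ M, cl a b x z) : IsDominatingMultiset G M := by
  intro z
  obtain ⟨x, hx, hxz⟩ := h z
  rcases (cl_iff G a b hab hadj x z).mp hxz with rfl | hAdj
  · exact Or.inl hx
  · exact Or.inr ⟨x, hx, hAdj⟩

lemma forall_cl_of_dom (hab : ∀ v, a v ≤ b v)
    (hadj : ∀ u v : V, u ≠ v →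
      (G.Adj u v ↔ (Set.Icc (a u) (b u) ∩ Set.Icc (a v) (b v)).Nonempty))
    (M : Multiset V) (h : IsDominatingMultiset G M) : ∀ z, ∃ x ∈ M, cl a b x z := by
  intro z
  rcases h z with hz | ⟨x, hx, hAdj⟩
  · exact ⟨z, hz, cl_refl hab z⟩
  · exact ⟨x, hx, (cl_iff G a b hab hadj x z).mpr (Or.inr hAdj)⟩

end withGraph

/-- Pick a vertex of `U` whose interval ends first. -/
noncomputable def pickW (b : V → ℝ) (U : Finset V) (h : U.Nonempty) : V :=
  (Finset.exists_min_image U b h).choose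

lemma pickW_mem (b : V → ℝ) (U : Finset V) (h : U.Nonempty) : pickW b U h ∈ U :=
  (Finset.exists_min_image U b h).choose_spec.1

lemma pickW_min (b : V → ℝ) (U : Finset V) (h : U.Nonempty) :
    ∀ z ∈ U, b (pickW b U h) ≤ b z :=
  (Finset.exists_min_image U b h).choose_spec.2

/-- Pick a closed neighbor of `w` whose interval ends last. -/
noncomputable def pickC (a b : V → ℝ) (hab : ∀ v, a v ≤ b v) (w : V) : V :=
  (Finset.exists_max_image (Finset.univ.filter (fun x => cl a b w x)) b
    ⟨w, Finset.mem_filter.mpr ⟨Finset.mem_univ w, cl_refl hab w⟩⟩).choose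

lemma pickC_cl (a b : V → ℝ) (hab : ∀ v, a v ≤ b v) (w : V) :
    cl a b w (pickC a b hab w) := by
  have h := (Finset.exists_max_image (Finset.univ.filter (fun x => cl a b w x)) b
    ⟨w, Finset.mem_filter.mpr ⟨Finset.mem_univ w, cl_refl hab w⟩⟩).choose_spec.1
  exact (Finset.mem_filter.mp h).2

lemma pickC_max (a b : V → ℝ) (hab : ∀ v, a v ≤ b v) (w : V) :
    ∀ x, cl a b w x → b x ≤ b (pickC a b hab w) := by
  intro x hx
  exact (Finset.exists_max_image (Finset.univ.filter (fun y => cl a b w y)) b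
    ⟨w, Finset.mem_filter.mpr ⟨Finset.mem_univ w, cl_refl hab w⟩⟩).choose_spec.2 x
    (Finset.mem_filter.mpr ⟨Finset.mem_univ x, hx⟩)

/-- The canonical configuration of `k` tokens with respect to the still-undominated
set `U`, stacking surplus tokens on `t`. -/
noncomputable def canonTokens (a b : V → ℝ) (hab : ∀ v, a v ≤ b v)
    (U : Finset V) (k : ℕ) (t : V) : Multiset V :=
  if h : U.Nonempty then
    pickC a b hab (pickW b U h) ::ₘ
      canonTokens a b hab
        (U.filter fun z => ¬ cl a b (pickC a b hab (pickW b U h)) z) (k - 1)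
        (pickC a b hab (pickW b U h))
  else Multiset.replicate k t
termination_by U.card
decreasing_by
  exact Finset.card_lt_card (Finset.filter_ssubset.mpr
    ⟨pickW b U h, pickW_mem b U h, by
      simp only [not_not]
      exact cl_symm (pickC_cl a b hab (pickW b U h))⟩)

section main

variable (G : SimpleGraph V) (a b : V → ℝ)

/-- A single token slide between configurations written in cons form. -/
lemma tsstep_cons {u v : V} (h : G.Adj u v) (M : Multiset V)
    (h1 : IsDominatingMultiset G (u ::ₘ M)) (h2 : IsDominatingMultiset G (v ::ₘ M)) :
    TSStep G (u ::ₘ M) (v ::ₘ M) :=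
  ⟨h1, h2, u, v, h, Multiset.mem_cons_self u M, by rw [Multiset.erase_cons_head]⟩

/-- Move a single token along a walk while `M` dominates everything. -/
lemma move_token (hab : ∀ v, a v ≤ b v)
    (hadj : ∀ u v : V, u ≠ v →
      (G.Adj u v ↔ (Set.Icc (a u) (b u) ∩ Set.Icc (a v) (b v)).Nonempty))
    (hconn : G.Connected)
    (M : Multiset V) (hM : ∀ z, ∃ x ∈ M, cl a b x z) (u t : V) :
    TSReachable G (u ::ₘ M) (t ::ₘ M) := by
  have hdom : ∀ x : V, IsDominatingMultiset G (x ::ₘ M) := by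
    intro x
    refine dom_of_forall_cl G a b hab hadj _ (fun z => ?_)
    obtain ⟨y, hy, hyz⟩ := hM z
    exact ⟨y, Multiset.mem_cons_of_mem hy, hyz⟩
  obtain ⟨p⟩ := hconn.preconnected u t
  induction p with
  | nil => exact Relation.ReflTransGen.refl
  | cons h q ih =>
    exact Relation.ReflTransGen.head (tsstep_cons G h M (hdom _) (hdom _)) ih

/-- Stack all tokens of `D` onto `t` while `C` dominates everything. -/
lemma reach_replicate (hab : ∀ v, a v ≤ b v)
    (hadj : ∀ u v : V, u ≠ v →
      (G.Adj u v ↔ (Set.Icc (a u) (b u) ∩ Set.Icc (a v) (b v)).Nonempty))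
    (hconn : G.Connected) (t : V) :
    ∀ (D C : Multiset V), (∀ z, ∃ x ∈ C, cl a b x z) →
      TSReachable G (C + D) (C + Multiset.replicate (Multiset.card D) t) := by
  intro D
  induction D using Multiset.induction with
  | empty =>
    intro C _
    simp only [Multiset.card_zero, Multiset.replicate_zero]
    exact Relation.ReflTransGen.refl
  | cons u D ih =>
    intro C hC
    have hCD : ∀ z, ∃ x ∈ C + D, cl a b x z := by
      intro z
      obtain ⟨x, hx, hxz⟩ := hC z
      exact ⟨x, Multiset.mem_add.mpr (Or.inl hx), hxz⟩
    have h1 : TSReachable G (u ::ₘ (C + D)) (t ::ₘ (C + D)) :=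
      move_token G a b hab hadj hconn (C + D) hCD u t
    have hC' : ∀ z, ∃ x ∈ t ::ₘ C, cl a b x z := by
      intro z
      obtain ⟨x, hx, hxz⟩ := hC z
      exact ⟨x, Multiset.mem_cons_of_mem hx, hxz⟩
    have h2 := ih (t ::ₘ C) hC'
    have e1 : C + (u ::ₘ D) = u ::ₘ (C + D) := Multiset.add_cons u C D
    have e2 : t ::ₘ (C + D) = (t ::ₘ C) + D := (Multiset.cons_add t C D).symm
    have e3 : (t ::ₘ C) + Multiset.replicate (Multiset.card D) t
        = C + Multiset.replicate (Multiset.card (u ::ₘ D)) t := by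
      rw [Multiset.cons_add, Multiset.card_cons, Multiset.replicate_succ,
        Multiset.add_cons]
    rw [← e2] at h2
    rw [e1, ← e3]
    exact h1.trans h2

/-- Main lemma: from `C + D`, where `C` dominates the complement of `U` and `D`
dominates `U`, one can reach the canonical configuration. -/
lemma main (hab : ∀ v, a v ≤ b v)
    (hadj : ∀ u v : V, u ≠ v →
      (G.Adj u v ↔ (Set.Icc (a u) (b u) ∩ Set.Icc (a v) (b v)).Nonempty))
    (hconn : G.Connected) :
    ∀ n (D C : Multiset V) (U : Finset V) (t : V),
      Multiset.card D = n →
      (∀ z, z ∉ U → ∃ x ∈ C, cl a b x z) →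
      (∀ z ∈ U, ∃ u ∈ D, cl a b u z) →
      TSReachable G (C + D) (C + canonTokens a b hab U n t) := by
  intro n
  induction n with
  | zero =>
    intro D C U t hcard h1 h2
    have hD : D = 0 := Multiset.card_eq_zero.mp hcard
    have hU : ¬ U.Nonempty := by
      rintro ⟨z, hz⟩
      obtain ⟨x, hx, -⟩ := h2 z hz
      simp [hD] at hx
    rw [canonTokens, dif_neg hU, hD, Multiset.replicate_zero]
    exact Relation.ReflTransGen.refl
  | succ n ih =>
    intro D C U t hcard h1 h2
    by_cases hU : U.Nonempty
    · -- place a canonical token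
      set w : V := pickW b U hU with hw
      set c : V := pickC a b hab w with hc
      have hwU : w ∈ U := pickW_mem b U hU
      have hwmin : ∀ z ∈ U, b w ≤ b z := pickW_min b U hU
      have hwc : cl a b w c := pickC_cl a b hab w
      have hcmax : ∀ x, cl a b w x → b x ≤ b c := pickC_max a b hab w
      obtain ⟨u, hu, huw⟩ := h2 w hwU
      have hbu : b u ≤ b c := hcmax u (cl_symm huw)
      set D' : Multiset V := D.erase u with hD'
      have hcardD' : Multiset.card D' = n := by
        rw [hD', Multiset.card_erase_of_mem hu, hcard]
        rfl
      set U' : Finset V := U.filter (fun z => ¬ cl a b c z) with hU'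
      have key : ∀ z ∈ U, cl a b u z → cl a b c z := by
        intro z hz hcl
        exact ⟨le_trans hwc.2 (hwmin z hz), le_trans hcl.2 hbu⟩
      have hdom' : ∀ z ∈ U', ∃ x ∈ D', cl a b x z := by
        intro z hz
        have hzU : z ∈ U := (Finset.mem_filter.mp hz).1
        have hznc : ¬ cl a b c z := (Finset.mem_filter.mp hz).2
        obtain ⟨x, hx, hxz⟩ := h2 z hzU
        rcases eq_or_ne x u with rfl | hne
        · exact absurd (key z hzU hxz) hznc
        · exact ⟨x, (Multiset.mem_erase_of_ne hne).mpr hx, hxz⟩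
      have h1' : ∀ z, z ∉ U' → ∃ x ∈ (c ::ₘ C), cl a b x z := by
        intro z hz
        by_cases hzU : z ∈ U
        · have : cl a b c z := by
            by_contra hcon
            exact hz (Finset.mem_filter.mpr ⟨hzU, hcon⟩)
          exact ⟨c, Multiset.mem_cons_self c C, this⟩
        · obtain ⟨x, hx, hxz⟩ := h1 z hzU
          exact ⟨x, Multiset.mem_cons_of_mem hx, hxz⟩
      -- domination facts for the configurations that occur
      have domStart : IsDominatingMultiset G (u ::ₘ (C + D')) := by
        refine dom_of_forall_cl G a b hab hadj _ (fun z => ?_)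
        by_cases hzU : z ∈ U
        · obtain ⟨x, hx, hxz⟩ := h2 z hzU
          rcases eq_or_ne x u with rfl | hne
          · exact ⟨x, Multiset.mem_cons_self _ _, hxz⟩
          · exact ⟨x, Multiset.mem_cons_of_mem
              (Multiset.mem_add.mpr (Or.inr ((Multiset.mem_erase_of_ne hne).mpr hx))), hxz⟩
        · obtain ⟨x, hx, hxz⟩ := h1 z hzU
          exact ⟨x, Multiset.mem_cons_of_mem (Multiset.mem_add.mpr (Or.inl hx)), hxz⟩
      have domEnd : IsDominatingMultiset G (c ::ₘ (C + D')) := by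
        refine dom_of_forall_cl G a b hab hadj _ (fun z => ?_)
        by_cases hzU : z ∈ U
        · by_cases hcz : cl a b c z
          · exact ⟨c, Multiset.mem_cons_self _ _, hcz⟩
          · obtain ⟨x, hx, hxz⟩ := hdom' z (Finset.mem_filter.mpr ⟨hzU, hcz⟩)
            exact ⟨x, Multiset.mem_cons_of_mem (Multiset.mem_add.mpr (Or.inr hx)), hxz⟩
        · obtain ⟨x, hx, hxz⟩ := h1 z hzU
          exact ⟨x, Multiset.mem_cons_of_mem (Multiset.mem_add.mpr (Or.inl hx)), hxz⟩
      -- reach `c ::ₘ (C + D')` from `C + D`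
      have hsplit : C + D = u ::ₘ (C + D') := by
        rw [hD', ← Multiset.add_cons, Multiset.cons_erase hu]
      have hreach1 : TSReachable G (C + D) (c ::ₘ (C + D')) := by
        rw [hsplit]
        rcases eq_or_ne u c with rfl | hune
        · exact Relation.ReflTransGen.refl
        · by_cases huc : cl a b u c
          · -- one slide u → c
            have hAdj : G.Adj u c := by
              rcases (cl_iff G a b hab hadj u c).mp huc with h | h
              · exact absurd h hune
              · exact h
            exact Relation.ReflTransGen.single
              (tsstep_cons G hAdj (C + D') domStart domEnd)
          · -- two slides u → w → c
            have hbuc : b u < a c := by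
              by_contra hcon
              push_neg at hcon
              exact huc ⟨le_trans (hab u) hbu, hcon⟩
            have hunw : u ≠ w := by
              intro hh
              rw [hh] at hbuc
              exact absurd hwc.2 (not_le.mpr hbuc)
            have hwnc : w ≠ c := by
              intro hh
              rw [← hh] at hbuc
              exact absurd huw.2 (not_le.mpr hbuc)
            have hAdj1 : G.Adj u w := by
              rcases (cl_iff G a b hab hadj u w).mp huw with h | h
              · exact absurd h hunw
              · exact h
            have hAdj2 : G.Adj w c := by
              rcases (cl_iff G a b hab hadj w c).mp hwc with h | h
              · exact absurd h hwnc
              · exact h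
            have domMid : IsDominatingMultiset G (w ::ₘ (C + D')) := by
              refine dom_of_forall_cl G a b hab hadj _ (fun z => ?_)
              by_cases hzU : z ∈ U
              · obtain ⟨x, hx, hxz⟩ := h2 z hzU
                rcases eq_or_ne x u with rfl | hne
                · refine ⟨w, Multiset.mem_cons_self _ _, ?_⟩
                  exact ⟨le_trans (hab w) (hwmin z hzU),
                    le_trans hxz.2 (le_trans (le_of_lt hbuc) hwc.2)⟩
                · exact ⟨x, Multiset.mem_cons_of_mem
                    (Multiset.mem_add.mpr (Or.inr ((Multiset.mem_erase_of_ne hne).mpr hx))),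
                    hxz⟩
              · obtain ⟨x, hx, hxz⟩ := h1 z hzU
                exact ⟨x, Multiset.mem_cons_of_mem (Multiset.mem_add.mpr (Or.inl hx)), hxz⟩
            exact Relation.ReflTransGen.head
              (tsstep_cons G hAdj1 (C + D') domStart domMid)
              (Relation.ReflTransGen.single
                (tsstep_cons G hAdj2 (C + D') domMid domEnd))
      -- recurse
      have hrec := ih D' (c ::ₘ C) U' c hcardD' h1' hdom'
      have e1 : (c ::ₘ C) + D' = c ::ₘ (C + D') := Multiset.cons_add c C D'
      have e2 : C + canonTokens a b hab U (n + 1) t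
          = (c ::ₘ C) + canonTokens a b hab U' n c := by
        rw [canonTokens, dif_pos hU, Multiset.add_cons, Multiset.cons_add,
          Nat.add_sub_cancel, hU', hc, hw]
      rw [e2]
      exact hreach1.trans (e1 ▸ hrec)
    · -- U is empty: stack all tokens on t
      rw [canonTokens, dif_neg hU, ← hcard]
      exact reach_replicate G a b hab hadj hconn t D C (fun z => h1 z (fun hz => hU ⟨z, hz⟩))

end main

lemma tsstep_symm {G : SimpleGraph V} {D D' : Multiset V} (h : TSStep G D D') :
    TSStep G D' D := by
  obtain ⟨h1, h2, u, v, huv, hu, rfl⟩ := h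
  exact ⟨h2, h1, v, u, huv.symm, Multiset.mem_cons_self v _, by
    rw [Multiset.erase_cons_head, Multiset.cons_erase hu]⟩

end IGTS

/-- In a connected interval graph, any two dominating multisets of the same size
are TS-reachable from one another. -/
theorem interval_graph_TSReachable {V : Type*} [Fintype V] [DecidableEq V]
    (G : SimpleGraph V) (hconn : G.Connected) (hint : IsIntervalGraph G)
    (Ds Dt : Multiset V)
    (hDs : IsDominatingMultiset G Ds) (hDt : IsDominatingMultiset G Dt)
    (hcard : Multiset.card Ds = Multiset.card Dt) :
    TSReachable G Ds Dt := by
  obtain ⟨a, b, hab, hadj⟩ := hint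
  cases isEmpty_or_nonempty V with
  | inl h =>
    have hs : Ds = 0 := Multiset.eq_zero_of_forall_notMem fun x => (h.false x).elim
    have ht : Dt = 0 := Multiset.eq_zero_of_forall_notMem fun x => (h.false x).elim
    rw [hs, ht]
    exact Relation.ReflTransGen.refl
  | inr h =>
    obtain ⟨v0⟩ := h
    have h1 : ∀ z : V, z ∉ (Finset.univ : Finset V) → ∃ x ∈ (0 : Multiset V), IGTS.cl a b x z :=
      fun z hz => absurd (Finset.mem_univ z) hz
    have hs' : ∀ z ∈ (Finset.univ : Finset V), ∃ u ∈ Ds, IGTS.cl a b u z :=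
      fun z _ => IGTS.forall_cl_of_dom G a b hab hadj Ds hDs z
    have ht' : ∀ z ∈ (Finset.univ : Finset V), ∃ u ∈ Dt, IGTS.cl a b u z :=
      fun z _ => IGTS.forall_cl_of_dom G a b hab hadj Dt hDt z
    have Hs := IGTS.main G a b hab hadj hconn (Multiset.card Ds) Ds 0 Finset.univ v0 rfl h1 hs'
    have Ht := IGTS.main G a b hab hadj hconn (Multiset.card Ds) Dt 0 Finset.univ v0
      hcard.symm h1 ht'
    rw [zero_add] at Hs Ht
    exact Hs.trans (haveI : Std.Symm (TSStep G) := ⟨fun _ _ => IGTS.tsstep_symm⟩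
      Relation.ReflTransGen.symmetric.symm _ _ Ht)
end

section
/- Let G be a connected circular-arc graph, let u be a vertex of G, and let k be a positive integer. Then any two dominating multisets of G of size k that both contain u are TS-reachable from one another; in other words, all k-element dominating multisets of G containing u lie in the same connected component of the token-sliding reconfiguration graph. -/
/-- The arc of the circle `ℝ / ℤ` obtained by projecting the real interval `[s, e]`. -/
def circleArc (s e : ℝ) : Set (AddCircle (1 : ℝ)) :=
  (fun x : ℝ => (x : AddCircle (1 : ℝ))) '' Set.Icc s e

/-- `G` is a circular-arc graph: vertices can be assigned nonempty arcs of a circle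
so that two distinct vertices are adjacent iff their arcs intersect. -/
def IsCircularArcGraph {V : Type*} (G : SimpleGraph V) : Prop :=
  ∃ s e : V → ℝ, (∀ v, s v ≤ e v) ∧
    ∀ u v : V, u ≠ v →
      (G.Adj u v ↔ (circleArc (s u) (e u) ∩ circleArc (s v) (e v)).Nonempty)

namespace CircArcAux

open Multiset

variable {V : Type*} [Fintype V] [DecidableEq V]

set_option linter.unusedSectionVars false

/-- Shifted-interval overlap: the combinatorial meaning of arc intersection. -/
def Mts (s e : V → ℝ) (x y : V) : Prop :=
  ∃ n : ℤ, s x ≤ e y + n ∧ s y + n ≤ e x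

lemma mts_refl (s e : V → ℝ) (hse : ∀ v, s v ≤ e v) (x : V) : Mts s e x x :=
  ⟨0, by push_cast; linarith [hse x], by push_cast; linarith [hse x]⟩

lemma mts_symm {s e : V → ℝ} {x y : V} (h : Mts s e x y) : Mts s e y x := by
  obtain ⟨n, h1, h2⟩ := h
  exact ⟨-n, by push_cast; linarith, by push_cast; linarith⟩

/-- Arc intersection on the circle is the same as shifted-interval overlap. -/
lemma arc_inter_iff (s e : V → ℝ) (hse : ∀ v, s v ≤ e v) (x y : V) :
    (circleArc (s x) (e x) ∩ circleArc (s y) (e y)).Nonempty ↔ Mts s e x y := by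
  constructor
  · rintro ⟨z, ⟨a, ha, haz⟩, ⟨b, hb, hbz⟩⟩
    have hab : (a : AddCircle (1:ℝ)) = b := by
      show (fun x : ℝ => (x : AddCircle (1:ℝ))) a = (fun x : ℝ => (x : AddCircle (1:ℝ))) b
      rw [haz, hbz]
    have := QuotientAddGroup.eq.mp hab
    rw [AddSubgroup.mem_zmultiples_iff] at this
    obtain ⟨k, hk⟩ := this
    rw [zsmul_eq_mul, mul_one] at hk
    -- b = a + k
    obtain ⟨ha1, ha2⟩ := ha
    obtain ⟨hb1, hb2⟩ := hb
    refine ⟨-k, ?_, ?_⟩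
    · push_cast; linarith
    · push_cast; linarith
  · rintro ⟨n, h1, h2⟩
    -- intervals [s x, e x] and [s y + n, e y + n] overlap
    set t : ℝ := max (s x) (s y + n) with ht
    have htx : t ∈ Set.Icc (s x) (e x) := by
      constructor
      · exact le_max_left _ _
      · apply max_le (hse x) h2
    have hty : t - n ∈ Set.Icc (s y) (e y) := by
      constructor
      · have : s y + (n:ℝ) ≤ t := le_max_right _ _
        linarith
      · have : t ≤ e y + n := max_le (by linarith) (by linarith [hse y])
        linarith
    refine ⟨(t : AddCircle (1:ℝ)), ⟨t, htx, rfl⟩, ⟨t - n, hty, ?_⟩⟩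
    show ((t - n : ℝ) : AddCircle (1:ℝ)) = t
    rw [QuotientAddGroup.eq, AddSubgroup.mem_zmultiples_iff]
    exact ⟨n, by rw [zsmul_eq_mul, mul_one]; ring⟩

section Graph

variable (G : SimpleGraph V) (s e : V → ℝ)

/-- `D` covers the target set `T` (w.r.t. the arc model). -/
def Covers (T : Set V) (D : Multiset V) : Prop :=
  ∀ v ∈ T, ∃ x ∈ D, Mts s e x v

/-- One token slide between `T`-covering configurations. -/
def StepT (T : Set V) (D D' : Multiset V) : Prop :=
  Covers s e T D ∧ Covers s e T D' ∧ TokenSlide G D D'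

/-- Reachability by token slides through `T`-covering configurations. -/
def ReachT (T : Set V) : Multiset V → Multiset V → Prop :=
  Relation.ReflTransGen (StepT G s e T)

end Graph

section Basic

variable {G : SimpleGraph V} {s e : V → ℝ}

lemma stepT_symm {T : Set V} : Symmetric (StepT G s e T) := by
  rintro D D' ⟨h1, h2, a, b, hab, haD, hD'⟩
  refine ⟨h2, h1, b, a, hab.symm, by rw [hD']; exact mem_cons_self _ _, ?_⟩
  rw [hD', Multiset.erase_cons_head, Multiset.cons_erase haD]

lemma reachT_symm {T : Set V} {D D' : Multiset V} (h : ReachT G s e T D D') :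
    ReachT G s e T D' D :=
  haveI : Std.Symm (StepT G s e T) := ⟨stepT_symm⟩
  (Relation.ReflTransGen.stdSymm (r := StepT G s e T)).symm _ _ h

lemma reachT_trans {T : Set V} {D D' D'' : Multiset V} (h : ReachT G s e T D D')
    (h' : ReachT G s e T D' D'') : ReachT G s e T D D'' :=
  Relation.ReflTransGen.trans h h'

lemma covers_cons {T : Set V} {D : Multiset V} (c : V) (h : Covers s e T D) :
    Covers s e T (c ::ₘ D) := by
  intro v hv
  obtain ⟨x, hx, hm⟩ := h v hv
  exact ⟨x, mem_cons_of_mem hx, hm⟩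

lemma erase_cons_comm {c x : V} {X : Multiset V} (hx : x ∈ X) :
    (c ::ₘ X).erase x = c ::ₘ X.erase x := by
  by_cases hxc : x = c
  · subst hxc
    rw [Multiset.erase_cons_head, Multiset.cons_erase hx]
  · exact Multiset.erase_cons_tail _ (fun h => hxc h.symm)

/-- Lifting a reconfiguration sequence by an extra fixed token `c`. -/
lemma liftReach {T T'' : Set V} {c : V} (hT : ∀ v ∈ T, Mts s e c v ∨ v ∈ T'')
    {X Y : Multiset V} (h : ReachT G s e T'' X Y) :
    ReachT G s e T (c ::ₘ X) (c ::ₘ Y) := by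
  have hcov : ∀ {U : Multiset V}, Covers s e T'' U → Covers s e T (c ::ₘ U) := by
    intro U hU v hv
    rcases hT v hv with hc | hT''
    · exact ⟨c, mem_cons_self _ _, hc⟩
    · obtain ⟨x, hx, hm⟩ := hU v hT''
      exact ⟨x, mem_cons_of_mem hx, hm⟩
  induction h with
  | refl => exact Relation.ReflTransGen.refl
  | @tail Z W _hR hstep ih =>
      refine ih.tail ?_
      obtain ⟨h1, h2, a, b, hab, haZ, hW⟩ := hstep
      refine ⟨hcov h1, hcov h2, a, b, hab, mem_cons_of_mem haZ, ?_⟩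
      rw [hW, erase_cons_comm haZ, Multiset.cons_swap]

/-- Moving one token along a walk keeps covering, provided a token at `u` covers all of `T`. -/
lemma walkMove {T : Set V} {u : V} (hu : ∀ v ∈ T, Mts s e u v)
    {a b : V} (w : G.Walk a b) (X : Multiset V) (huX : u ∈ X) :
    ReachT G s e T (a ::ₘ X) (b ::ₘ X) := by
  have hcov : ∀ (t : V), Covers s e T (t ::ₘ X) := by
    intro t v hv
    exact ⟨u, mem_cons_of_mem huX, hu v hv⟩
  induction w with
  | nil => exact Relation.ReflTransGen.refl
  | @cons x y z h p ih =>
      refine Relation.ReflTransGen.head ?_ ih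
      refine ⟨hcov x, hcov y, x, y, h, mem_cons_self _ _, ?_⟩
      rw [Multiset.erase_cons_head]

end Basic


section Window

variable {G : SimpleGraph V}

/-- The canonical lift index placing the arc of `v` inside the window of `u`. -/
noncomputable def nv (s e : V → ℝ) (u v : V) : ℤ := ⌊e u - s v⌋ + 1

/-- Left endpoint of the window lift of `v`. -/
noncomputable def av (s e : V → ℝ) (u v : V) : ℝ := s v + nv s e u v

/-- Right endpoint of the window lift of `v`. -/
noncomputable def bv (s e : V → ℝ) (u v : V) : ℝ := e v + nv s e u v

variable {s e : V → ℝ} {u : V}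

lemma av_le_bv (hse : ∀ x, s x ≤ e x) (v : V) : av s e u v ≤ bv s e u v := by
  unfold av bv; linarith [hse v]

lemma av_gt (v : V) : e u < av s e u v := by
  unfold av nv
  have := Int.lt_floor_add_one (e u - s v)
  push_cast
  linarith

lemma bv_lt {v : V} (hnm : ¬ Mts s e u v) : bv s e u v < s u + 1 := by
  by_contra hcon
  push_neg at hcon
  apply hnm
  refine ⟨nv s e u v - 1, ?_, ?_⟩
  · unfold bv at hcon; push_cast; linarith
  · have := Int.floor_le (e u - s v)
    unfold nv; push_cast; linarith

lemma len_lt_one (hse : ∀ x, s x ≤ e x) {v : V} (hnm : ¬ Mts s e u v) :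
    e v - s v < 1 := by
  have h1 := av_gt (s := s) (e := e) (u := u) v
  have h2 := bv_lt hnm
  have h3 := hse u
  unfold av bv at *
  linarith

/-- Covering from an explicit lift. -/
lemma cov_of_lift {v x : V} (n : ℤ) (h1 : s x + n ≤ bv s e u v)
    (h2 : av s e u v ≤ e x + n) : Mts s e x v := by
  refine ⟨nv s e u v - n, ?_, ?_⟩
  · unfold bv at h1; push_cast; linarith
  · unfold av at h2; push_cast; linarith

/-- From covering to an explicit lift. -/
lemma lift_of_cov {v x : V} (h : Mts s e x v) :
    ∃ n : ℤ, s x + n ≤ bv s e u v ∧ av s e u v ≤ e x + n := by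
  obtain ⟨m, h1, h2⟩ := h
  refine ⟨nv s e u v - m, ?_, ?_⟩
  · unfold bv; push_cast; linarith
  · unfold av; push_cast; linarith

/-- The rightward reach of `x` among lifts meeting the window interval of `w`. -/
noncomputable def reach (s e : V → ℝ) (u w x : V) : ℝ :=
  e x + ⌊bv s e u w - s x⌋

lemma reach_left (w x : V) : s x + ⌊bv s e u w - s x⌋ ≤ bv s e u w := by
  have := Int.floor_le (bv s e u w - s x)
  linarith

lemma reach_right {w x : V} (hx : Mts s e x w) :
    av s e u w ≤ reach s e u w x := by
  obtain ⟨n, hn1, hn2⟩ := lift_of_cov (u := u) hx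
  have hle : n ≤ ⌊bv s e u w - s x⌋ := Int.le_floor.mpr (by linarith)
  have : (n : ℝ) ≤ (⌊bv s e u w - s x⌋ : ℝ) := by exact_mod_cast hle
  unfold reach
  linarith

lemma reach_self (hse : ∀ x, s x ≤ e x) {w : V} (hw : ¬ Mts s e u w) :
    reach s e u w w = bv s e u w := by
  have hlen := len_lt_one hse hw
  have hfl : ⌊bv s e u w - s w⌋ = nv s e u w := by
    rw [Int.floor_eq_iff]
    constructor
    · unfold bv; push_cast; linarith [hse w]
    · unfold bv; push_cast; linarith
  unfold reach
  rw [hfl]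
  unfold bv
  ring

/-- `t` is a wrapper relative to `u`: it dominates strictly more. -/
def Wr (s e : V → ℝ) (t u : V) : Prop :=
  {y : V | ¬ Mts s e t y} ⊂ {y : V | ¬ Mts s e u y}

lemma wr_mono {t : V} (h : Wr s e t u) {y : V} (hy : Mts s e u y) : Mts s e t y := by
  by_contra hcon
  exact (h.1 hcon) hy

lemma wr_ne {t : V} (h : Wr s e t u) : t ≠ u := by
  rintro rfl
  exact (ssubset_irrefl _) h

lemma wr_mts_u (hse : ∀ x, s x ≤ e x) {t : V} (h : Wr s e t u) : Mts s e t u :=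
  wr_mono h (mts_refl s e hse u)

open scoped Classical in
/-- Number of vertices not covered by `x`: the induction measure. -/
noncomputable def cardW (s e : V → ℝ) (x : V) : ℕ :=
  (Finset.univ.filter fun y => ¬ Mts s e x y).card

open scoped Classical in
lemma wr_card {t : V} (h : Wr s e t u) : cardW s e t < cardW s e u := by
  classical
  apply Finset.card_lt_card
  rw [Finset.ssubset_iff_of_subset]
  · obtain ⟨y, hyu, hyt⟩ := Set.exists_of_ssubset h
    exact ⟨y, by simpa using hyu, by simpa using hyt⟩
  · intro y hy
    simp only [Finset.mem_filter, Finset.mem_univ, true_and] at hy ⊢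
    exact h.1 hy

lemma mts_of_long (hse : ∀ x, s x ≤ e x) (h1 : 1 ≤ e u - s u) (v : V) :
    Mts s e u v := by
  refine ⟨⌈s u - e v⌉, ?_, ?_⟩
  · have := Int.le_ceil (s u - e v); linarith
  · have := Int.ceil_lt_add_one (s u - e v)
    have := hse v
    linarith

/-- The key structural lemma: an unwrapped token covering both `w` and `v`
covers `v` within reach of `w`. -/
lemma key_lemma (hse : ∀ x, s x ≤ e x) {w v t : V}
    (hw : ¬ Mts s e u w) (hv : ¬ Mts s e u v) (hnw : ¬ Wr s e t u)
    (htw : Mts s e t w) (htv : Mts s e t v) :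
    av s e u v ≤ reach s e u w t := by
  obtain ⟨n₁, hn₁l, hn₁r⟩ := lift_of_cov (u := u) htv
  by_cases hn : n₁ ≤ ⌊bv s e u w - s t⌋
  · have : (n₁ : ℝ) ≤ (⌊bv s e u w - s t⌋ : ℝ) := by exact_mod_cast hn
    unfold reach; linarith
  · exfalso
    push_neg at hn
    obtain ⟨n₀, hn₀l, hn₀r⟩ := lift_of_cov (u := u) htw
    have hn₀ : n₀ ≤ ⌊bv s e u w - s t⌋ := Int.le_floor.mpr (by linarith)
    have hn01 : n₀ + 1 ≤ n₁ := by omega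
    have hn01' : (n₀ : ℝ) + 1 ≤ (n₁ : ℝ) := by exact_mod_cast hn01
    -- t is a wrapper: its lift n₁ contains the (shifted) arc of u
    have hbv : bv s e u v < s u + 1 := bv_lt hv
    have haw : e u < av s e u w := av_gt w
    apply hnw
    rw [Wr, Set.ssubset_def]
    constructor
    · -- Mts u y → Mts t y, contrapositively
      intro y hy
      simp only [Set.mem_setOf_eq] at hy ⊢
      intro hmuy
      apply hy
      obtain ⟨m, hm1, hm2⟩ := hmuy
      refine ⟨m - n₁ + 1, ?_, ?_⟩
      · push_cast; linarith
      · push_cast; linarith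
    · intro hcon
      exact (hcon hv) htv

end Window


section Main

variable {G : SimpleGraph V} {s e : V → ℝ} {u : V}

lemma adj_of_mts (hadj : ∀ x y : V, x ≠ y → (G.Adj x y ↔ Mts s e x y))
    {x y : V} (hne : x ≠ y) (h : Mts s e x y) : G.Adj x y :=
  (hadj x y hne).2 h

/-- The move lemma: slide a coverer of `w` to the extremal vertex `c` (≤ 2 slides). -/
lemma move_step (hse : ∀ x, s x ≤ e x)
    (hadj : ∀ x y : V, x ≠ y → (G.Adj x y ↔ Mts s e x y))
    {T : Set V} {w c : V}
    (hwT : w ∈ T) (hwu : ¬ Mts s e u w)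
    (hwmin : ∀ v ∈ T, ¬ Mts s e u v → bv s e u w ≤ bv s e u v)
    (hcw : Mts s e c w)
    (hcmax : ∀ x, Mts s e x w → reach s e u w x ≤ reach s e u w c)
    {D : Multiset V} (huD : u ∈ D) (hDcov : Covers s e T D)
    {d : V} (hdD : d ∈ D) (hdw : Mts s e d w) (hdnw : ¬ Wr s e d u) :
    ReachT G s e T D (c ::ₘ D.erase d) := by
  have hdu : d ≠ u := fun h => hwu (h ▸ hdw)
  have huE : u ∈ D.erase d := (Multiset.mem_erase_of_ne (fun h => hdu h.symm)).2 huD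
  have hbw_le : bv s e u w ≤ reach s e u w c := by
    have := hcmax w (mts_refl s e hse w)
    rwa [reach_self hse hwu] at this
  -- the final configuration covers T
  have hfin : Covers s e T (c ::ₘ D.erase d) := by
    intro v hv
    by_cases hcv : Mts s e c v
    · exact ⟨c, mem_cons_self _ _, hcv⟩
    obtain ⟨x, hxD, hxv⟩ := hDcov v hv
    by_cases hxE : x ∈ D.erase d
    · exact ⟨x, mem_cons_of_mem hxE, hxv⟩
    have hxd : x = d := by
      by_contra hne
      exact hxE ((Multiset.mem_erase_of_ne hne).2 hxD)
    subst hxd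
    by_cases huv : Mts s e u v
    · exact ⟨u, mem_cons_of_mem huE, huv⟩
    exfalso
    apply hcv
    have hav : av s e u v ≤ reach s e u w c :=
      le_trans (key_lemma hse hwu huv hdnw hdw hxv) (hcmax x hdw)
    exact cov_of_lift ⌊bv s e u w - s c⌋
      (le_trans (reach_left w c) (hwmin v hv huv)) hav
  by_cases hdc : d = c
  · subst hdc
    rw [Multiset.cons_erase hdD]
    exact Relation.ReflTransGen.refl
  by_cases hmdc : Mts s e d c
  · exact Relation.ReflTransGen.single
      ⟨hDcov, hfin, d, c, adj_of_mts hadj hdc hmdc, hdD, rfl⟩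
  -- route through w
  have hdwne : d ≠ w := by
    rintro rfl
    exact hmdc (mts_symm hcw)
  have hwcne : w ≠ c := by
    rintro rfl
    exact hmdc hdw
  have hdisj : reach s e u w d < s c + ⌊bv s e u w - s c⌋ := by
    by_contra hge
    push_neg at hge
    apply hmdc
    refine ⟨⌊bv s e u w - s c⌋ - ⌊bv s e u w - s d⌋, ?_, ?_⟩
    · have h1 : s d + (⌊bv s e u w - s d⌋ : ℝ) ≤ bv s e u w := reach_left w d
      have h2 : bv s e u w ≤ e c + ⌊bv s e u w - s c⌋ := hbw_le
      push_cast
      linarith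
    · have : s c + (⌊bv s e u w - s c⌋ : ℝ) ≤ e d + ⌊bv s e u w - s d⌋ := hge
      push_cast
      linarith
  have hmid : Covers s e T (w ::ₘ D.erase d) := by
    intro v hv
    obtain ⟨x, hxD, hxv⟩ := hDcov v hv
    by_cases hxE : x ∈ D.erase d
    · exact ⟨x, mem_cons_of_mem hxE, hxv⟩
    have hxd : x = d := by
      by_contra hne
      exact hxE ((Multiset.mem_erase_of_ne hne).2 hxD)
    subst hxd
    by_cases huv : Mts s e u v
    · exact ⟨u, mem_cons_of_mem huE, huv⟩
    refine ⟨w, mem_cons_self _ _, ?_⟩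
    have hav : av s e u v ≤ reach s e u w x := key_lemma hse hwu huv hdnw hdw hxv
    refine cov_of_lift (u := u) (nv s e u w) ?_ ?_
    · have h1 : av s e u w ≤ bv s e u w := av_le_bv hse w
      have h2 : bv s e u w ≤ bv s e u v := hwmin v hv huv
      unfold av at h1
      linarith
    · have h3 : s c + (⌊bv s e u w - s c⌋ : ℝ) ≤ bv s e u w := reach_left w c
      show av s e u v ≤ e w + (nv s e u w : ℝ)
      have : (e w + (nv s e u w : ℝ)) = bv s e u w := rfl
      rw [this]
      linarith
  refine Relation.ReflTransGen.head
    ⟨hDcov, hmid, d, w, adj_of_mts hadj hdwne hdw, hdD, rfl⟩ ?_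
  refine Relation.ReflTransGen.single
    ⟨hmid, ?_, w, c, adj_of_mts hadj hwcne (mts_symm hcw), mem_cons_self _ _, ?_⟩
  · exact hfin
  · rw [Multiset.erase_cons_head]

/-- When a token at `u` covers all of `T`, everything can be gathered at `u`. -/
lemma base_reach (hadj : ∀ x y : V, x ≠ y → (G.Adj x y ↔ Mts s e x y))
    (hconn : G.Connected) {T : Set V} (hT : ∀ v ∈ T, Mts s e u v) :
    ∀ (n : ℕ) (D : Multiset V), u ∈ D → (D.filter (fun x => ¬ x = u)).card = n →
      ReachT G s e T D (Multiset.replicate (Multiset.card D) u) := by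
  intro n
  induction n with
  | zero =>
      intro D huD hcard
      have hD : D = Multiset.replicate (Multiset.card D) u := by
        rw [Multiset.eq_replicate]
        refine ⟨rfl, ?_⟩
        intro b hb
        by_contra hbu
        have : b ∈ D.filter (fun x => ¬ x = u) := Multiset.mem_filter.2 ⟨hb, hbu⟩
        rw [Multiset.card_eq_zero.mp hcard] at this
        exact absurd this (Multiset.notMem_zero b)
      rw [← hD]
      exact Relation.ReflTransGen.refl
  | succ n ih =>
      intro D huD hcard
      have hne : ∃ t, t ∈ D.filter (fun x => ¬ x = u) := by
        rw [← Multiset.card_pos_iff_exists_mem, hcard]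
        omega
      obtain ⟨t, htf⟩ := hne
      obtain ⟨htD, htu⟩ := Multiset.mem_filter.1 htf
      have huE : u ∈ D.erase t := (Multiset.mem_erase_of_ne (fun h => htu h.symm)).2 huD
      obtain ⟨p⟩ := hconn.preconnected t u
      have h1 : ReachT G s e T (t ::ₘ D.erase t) (u ::ₘ D.erase t) := walkMove hT p _ huE
      rw [Multiset.cons_erase htD] at h1
      refine h1.trans ?_
      have hcard2 : ((u ::ₘ D.erase t).filter (fun x => ¬ x = u)).card = n := by
        rw [Multiset.filter_cons_of_neg (p := fun x => ¬ x = u) _ (by simp)]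
        have : D.filter (fun x => ¬ x = u) = t ::ₘ (D.erase t).filter (fun x => ¬ x = u) := by
          rw [← Multiset.filter_cons_of_pos (p := fun x => ¬ x = u) _ htu, Multiset.cons_erase htD]
        rw [this, Multiset.card_cons] at hcard
        omega
      have h2 := ih (u ::ₘ D.erase t) (mem_cons_self _ _) hcard2
      have hcc : Multiset.card (u ::ₘ D.erase t) = Multiset.card D := by
        rw [Multiset.card_cons, Multiset.card_erase_of_mem htD, Nat.pred_eq_sub_one]
        have : 0 < Multiset.card D := Multiset.card_pos_iff_exists_mem.2 ⟨u, huD⟩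
        omega
      rwa [hcc] at h2

/-- The main induction: anchored reconfiguration of `T`-covering multisets. -/
theorem good (hse : ∀ x, s x ≤ e x)
    (hadj : ∀ x y : V, x ≠ y → (G.Adj x y ↔ Mts s e x y))
    (hconn : G.Connected) :
    ∀ N : ℕ, ∀ u : V, cardW s e u < N →
    ∀ k : ℕ, ∀ T : Set V, ∀ D₁ D₂ : Multiset V, u ∈ D₁ → u ∈ D₂ →
      Multiset.card D₁ = k → Multiset.card D₂ = k →
      Covers s e T D₁ → Covers s e T D₂ → ReachT G s e T D₁ D₂ := by
  intro N
  induction N with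
  | zero => intro u h; exact absurd h (Nat.not_lt_zero _)
  | succ N ihN =>
    intro u huN k
    induction k using Nat.strong_induction_on with
    | _ k ihk =>
    intro T D₁ D₂ hu₁ hu₂ hc₁ hc₂ hcov₁ hcov₂
    have hkpos : 0 < k := hc₁ ▸ Multiset.card_pos_iff_exists_mem.2 ⟨u, hu₁⟩
    by_cases hbase : ∀ v ∈ T, Mts s e u v
    · have h₁ := base_reach (u := u) hadj hconn hbase _ D₁ hu₁ rfl
      have h₂ := base_reach (u := u) hadj hconn hbase _ D₂ hu₂ rfl
      rw [hc₁] at h₁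
      rw [hc₂] at h₂
      exact h₁.trans (reachT_symm h₂)
    push_neg at hbase
    obtain ⟨v₀, hv₀T, hv₀⟩ := hbase
    -- bridge through a wrapper using the outer induction hypothesis
    have bridge : ∀ A B : Multiset V, u ∈ A → u ∈ B →
        Multiset.card A = k → Multiset.card B = k →
        Covers s e T A → Covers s e T B → (∃ t ∈ A, Wr s e t u) →
        ReachT G s e T A B := by
      rintro A B huA huB hcA hcB hcovA hcovB ⟨t, htA, htW⟩
      have hCcov : Covers s e T (t ::ₘ B.erase u) := by
        intro v hv
        obtain ⟨x, hxB, hxv⟩ := hcovB v hv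
        by_cases hxE : x ∈ B.erase u
        · exact ⟨x, mem_cons_of_mem hxE, hxv⟩
        have hxu : x = u := by
          by_contra hne
          exact hxE ((Multiset.mem_erase_of_ne hne).2 hxB)
        subst hxu
        exact ⟨t, mem_cons_self _ _, wr_mono htW hxv⟩
      have hcC : Multiset.card (t ::ₘ B.erase u) = k := by
        rw [Multiset.card_cons, Multiset.card_erase_of_mem huB, hcB, Nat.pred_eq_sub_one]
        omega
      have h1 : ReachT G s e T A (t ::ₘ B.erase u) :=
        ihN t (lt_of_lt_of_le (wr_card htW) (Nat.lt_succ_iff.mp huN)) k T A _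
          htA (mem_cons_self _ _) hcA hcC hcovA hCcov
      refine h1.trans (Relation.ReflTransGen.single
        ⟨hCcov, hcovB, t, u, adj_of_mts hadj (wr_ne htW) (wr_mts_u hse htW),
          mem_cons_self _ _, ?_⟩)
      rw [Multiset.erase_cons_head]
      exact (Multiset.cons_erase huB).symm
    by_cases hwrap₁ : ∃ t ∈ D₁, Wr s e t u
    · exact bridge D₁ D₂ hu₁ hu₂ hc₁ hc₂ hcov₁ hcov₂ hwrap₁
    by_cases hwrap₂ : ∃ t ∈ D₂, Wr s e t u
    · exact reachT_symm (bridge D₂ D₁ hu₂ hu₁ hc₂ hc₁ hcov₂ hcov₁ hwrap₂)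
    push_neg at hwrap₁ hwrap₂
    classical
    -- the sweep step: minimal uncovered target, extremal coverer
    obtain ⟨w, hwTW, hwmin'⟩ := Finset.exists_min_image
      (Finset.univ.filter (fun v => v ∈ T ∧ ¬ Mts s e u v)) (fun v => bv s e u v)
      ⟨v₀, by simp [hv₀T, hv₀]⟩
    simp only [Finset.mem_filter, Finset.mem_univ, true_and] at hwTW
    have hwmin : ∀ v ∈ T, ¬ Mts s e u v → bv s e u w ≤ bv s e u v := by
      intro v hv hnv
      exact hwmin' v (by simp [hv, hnv])
    obtain ⟨c, hcC, hcmax'⟩ := Finset.exists_max_image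
      (Finset.univ.filter (fun x => Mts s e x w)) (reach s e u w)
      ⟨w, by simp [mts_refl s e hse w]⟩
    simp only [Finset.mem_filter, Finset.mem_univ, true_and] at hcC
    have hcmax : ∀ x, Mts s e x w → reach s e u w x ≤ reach s e u w c := by
      intro x hx
      exact hcmax' x (by simp [hx])
    obtain ⟨d₁, hd₁D, hd₁w⟩ := hcov₁ w hwTW.1
    obtain ⟨d₂, hd₂D, hd₂w⟩ := hcov₂ w hwTW.1
    have m₁ : ReachT G s e T D₁ (c ::ₘ D₁.erase d₁) :=
      move_step hse hadj hwTW.1 hwTW.2 hwmin hcC hcmax hu₁ hcov₁ hd₁D hd₁w (hwrap₁ d₁ hd₁D)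
    have m₂ : ReachT G s e T D₂ (c ::ₘ D₂.erase d₂) :=
      move_step hse hadj hwTW.1 hwTW.2 hwmin hcC hcmax hu₂ hcov₂ hd₂D hd₂w (hwrap₂ d₂ hd₂D)
    -- recurse with one fewer token on the part not covered by c
    have hd₁u : d₁ ≠ u := fun h => hwTW.2 (h ▸ hd₁w)
    have hd₂u : d₂ ≠ u := fun h => hwTW.2 (h ▸ hd₂w)
    have huE₁ : u ∈ D₁.erase d₁ := (Multiset.mem_erase_of_ne (fun h => hd₁u h.symm)).2 hu₁
    have huE₂ : u ∈ D₂.erase d₂ := (Multiset.mem_erase_of_ne (fun h => hd₂u h.symm)).2 hu₂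
    have hEcov : ∀ (D : Multiset V) (d : V), d ∈ D → Mts s e d w → (¬ Wr s e d u) →
        u ∈ D.erase d → Covers s e T D →
        Covers s e {v | v ∈ T ∧ ¬ Mts s e c v} (D.erase d) := by
      rintro D d hdD hdw hdnw huE hcov v ⟨hvT, hvc⟩
      obtain ⟨x, hxD, hxv⟩ := hcov v hvT
      by_cases hxE : x ∈ D.erase d
      · exact ⟨x, hxE, hxv⟩
      have hxd : x = d := by
        by_contra hne
        exact hxE ((Multiset.mem_erase_of_ne hne).2 hxD)
      subst hxd
      by_cases huv : Mts s e u v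
      · exact ⟨u, huE, huv⟩
      exfalso
      apply hvc
      have hav : av s e u v ≤ reach s e u w c :=
        le_trans (key_lemma hse hwTW.2 huv hdnw hdw hxv) (hcmax x hdw)
      exact cov_of_lift ⌊bv s e u w - s c⌋
        (le_trans (reach_left w c) (hwmin v hvT huv)) hav
    have hrec : ReachT G s e {v | v ∈ T ∧ ¬ Mts s e c v} (D₁.erase d₁) (D₂.erase d₂) := by
      refine ihk (k - 1) (by omega) _ _ _ huE₁ huE₂ ?_ ?_
        (hEcov D₁ d₁ hd₁D hd₁w (hwrap₁ d₁ hd₁D) huE₁ hcov₁)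
        (hEcov D₂ d₂ hd₂D hd₂w (hwrap₂ d₂ hd₂D) huE₂ hcov₂)
      · rw [Multiset.card_erase_of_mem hd₁D, hc₁, Nat.pred_eq_sub_one]
      · rw [Multiset.card_erase_of_mem hd₂D, hc₂, Nat.pred_eq_sub_one]
    have hlift : ReachT G s e T (c ::ₘ D₁.erase d₁) (c ::ₘ D₂.erase d₂) := by
      refine liftReach ?_ hrec
      intro v hv
      by_cases h : Mts s e c v
      · exact Or.inl h
      · exact Or.inr ⟨hv, h⟩
    exact m₁.trans (hlift.trans (reachT_symm m₂))

end Main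

end CircArcAux

/-- In a connected circular-arc graph, all `k`-element dominating multisets containing a
fixed vertex `u` lie in the same connected component of the TS-reconfiguration graph. -/
theorem circularArc_TSReachable_of_mem {V : Type*} [Fintype V] [DecidableEq V]
    (G : SimpleGraph V) (hconn : G.Connected) (harc : IsCircularArcGraph G)
    (u : V) (k : ℕ) (hk : 0 < k)
    (D₁ D₂ : Multiset V)
    (hD₁ : IsDominatingMultiset G D₁) (hD₂ : IsDominatingMultiset G D₂)
    (hc₁ : Multiset.card D₁ = k) (hc₂ : Multiset.card D₂ = k)
    (hu₁ : u ∈ D₁) (hu₂ : u ∈ D₂) :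
    TSReachable G D₁ D₂ := by
  classical
  obtain ⟨s, e, hse, hiff⟩ := harc
  have hadj : ∀ x y : V, x ≠ y → (G.Adj x y ↔ CircArcAux.Mts s e x y) := by
    intro x y hne
    rw [hiff x y hne, CircArcAux.arc_inter_iff s e hse x y]
  have hdom : ∀ D : Multiset V,
      IsDominatingMultiset G D ↔ CircArcAux.Covers s e Set.univ D := by
    intro D
    constructor
    · intro h v _
      rcases h v with hv | ⟨x, hx, hxv⟩
      · exact ⟨v, hv, CircArcAux.mts_refl s e hse v⟩
      · exact ⟨x, hx, (hadj x v (G.ne_of_adj hxv)).1 hxv⟩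
    · intro h v
      obtain ⟨x, hx, hxv⟩ := h v (Set.mem_univ v)
      by_cases hxv' : x = v
      · subst hxv'; exact Or.inl hx
      · exact Or.inr ⟨x, hx, (hadj x v hxv').2 hxv⟩
  have h := CircArcAux.good hse hadj hconn (CircArcAux.cardW s e u + 1) u
    (Nat.lt_succ_self _) k Set.univ D₁ D₂ hu₁ hu₂ hc₁ hc₂
    ((hdom D₁).1 hD₁) ((hdom D₂).1 hD₂)
  refine Relation.ReflTransGen.mono ?_ _ _ h
  rintro A B ⟨h1, h2, hs⟩
  exact ⟨(hdom A).2 h1, (hdom B).2 h2, hs⟩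
end

section
/- Let G be a finite simple graph and let u and v be vertices of G whose closed neighborhoods satisfy N(u) ∪ {u} ⊆ N(v) ∪ {v}. For a multiset D of vertices, let D[u→v] denote the multiset obtained from D by replacing every occurrence of u by v. If D_s and D_t are dominating multisets of G and D_t is TS-reachable from D_s, then D_t[u→v] is TS-reachable from D_s[u→v] (where TS-reachability is the reflexive–transitive closure, i.e., consecutive dominating multisets in the sequence are either equal or related by a single token slide). -/
/-- The multiset obtained from `D` by replacing every occurrence of `u` by `v`. -/
def replaceVertex {V : Type*} [DecidableEq V] (D : Multiset V) (u v : V) : Multiset V :=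
  D.map (fun x => if x = u then v else x)

lemma mem_replace_self {V : Type*} [DecidableEq V] {D : Multiset V} {u : V} (v : V)
    (hu : u ∈ D) : v ∈ replaceVertex D u v :=
  Multiset.mem_map.2 ⟨u, hu, by simp⟩

lemma mem_replace_other {V : Type*} [DecidableEq V] {D : Multiset V} {u x : V} (v : V)
    (hx : x ∈ D) (hxu : x ≠ u) : x ∈ replaceVertex D u v :=
  Multiset.mem_map.2 ⟨x, hx, by simp [hxu]⟩

lemma dom_replace {V : Type*} [DecidableEq V] (G : SimpleGraph V) (u v : V)
    (h : insert u (G.neighborSet u) ⊆ insert v (G.neighborSet v))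
    {D : Multiset V} (hD : IsDominatingMultiset G D) :
    IsDominatingMultiset G (replaceVertex D u v) := by
  intro w
  rcases hD w with hw | ⟨x, hx, hadj⟩
  · by_cases hwu : w = u
    · have hv : v ∈ replaceVertex D u v := mem_replace_self v (hwu ▸ hw)
      rcases h (Set.mem_insert u _) with h1 | h2
      · left; rw [hwu]; exact Multiset.mem_map.2 ⟨u, hwu ▸ hw, by simp [← h1]⟩
      · right; exact ⟨v, hv, by rw [hwu]; exact h2⟩
    · left; exact mem_replace_other v hw hwu
  · by_cases hxu : x = u
    · have hv : v ∈ replaceVertex D u v := mem_replace_self v (hxu ▸ hx)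
      have hadj' : G.Adj u w := hxu ▸ hadj
      rcases h (Set.mem_insert_iff.2 (Or.inr hadj')) with h1 | h2
      · left; rw [h1]; exact hv
      · right; exact ⟨v, hv, h2⟩
    · right; exact ⟨x, mem_replace_other v hx hxu, hadj⟩

lemma replace_slide {V : Type*} [DecidableEq V] {G : SimpleGraph V} {u v : V}
    (h : insert u (G.neighborSet u) ⊆ insert v (G.neighborSet v))
    {D D' : Multiset V} (hs : TokenSlide G D D') :
    replaceVertex D u v = replaceVertex D' u v ∨
      TokenSlide G (replaceVertex D u v) (replaceVertex D' u v) := by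
  obtain ⟨a, b, hab, ha, hD'⟩ := hs
  set f : V → V := fun x => if x = u then v else x with hf
  have hmapD' : replaceVertex D' u v = f b ::ₘ (replaceVertex D u v).erase (f a) := by
    have hDeq : D = a ::ₘ D.erase a := (Multiset.cons_erase ha).symm
    have : replaceVertex D u v = f a ::ₘ (D.erase a).map f := by
      rw [replaceVertex]; conv_lhs => rw [hDeq]
      simp [Multiset.map_cons, hf]
    rw [hD', replaceVertex, Multiset.map_cons, this, Multiset.erase_cons_head]
  have hfa : f a ∈ replaceVertex D u v := by
    by_cases hau : a = u
    · subst hau; simpa [hf] using mem_replace_self v ha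
    · simpa [hf, hau] using mem_replace_other v ha hau
  have hadjor : f a = f b ∨ G.Adj (f a) (f b) := by
    by_cases hau : a = u
    · by_cases hbu : b = u
      · exact absurd hab (by simp [hau, hbu])
      · have hb : b ∈ insert v (G.neighborSet v) :=
          h (Set.mem_insert_iff.2 (Or.inr (hau ▸ hab)))
        rcases hb with h1 | h2
        · left; simp [hf, hau, hbu, h1]
        · right; simpa [hf, hau, hbu] using h2
    · by_cases hbu : b = u
      · have ha' : a ∈ insert v (G.neighborSet v) :=
          h (Set.mem_insert_iff.2 (Or.inr (hbu ▸ hab.symm)))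
        rcases ha' with h1 | h2
        · left; simp [hf, hau, hbu, h1]
        · right; simpa [hf, hau, hbu] using h2.symm
      · right; simpa [hf, hau, hbu] using hab
  rcases hadjor with heq | hadj
  · left
    rw [hmapD', ← heq, Multiset.cons_erase hfa]
  · right
    exact ⟨f a, f b, hadj, hfa, hmapD'⟩

/-- If the closed neighborhood of `u` is contained in the closed neighborhood of `v`,
then replacing every occurrence of `u` by `v` along a TS-reconfiguration sequence
again yields a TS-reconfiguration sequence. -/
theorem replaceVertex_TSReachable {V : Type*} [Fintype V] [DecidableEq V]
    (G : SimpleGraph V) (u v : V)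
    (h : insert u (G.neighborSet u) ⊆ insert v (G.neighborSet v))
    (Ds Dt : Multiset V)
    (hDs : IsDominatingMultiset G Ds) (hDt : IsDominatingMultiset G Dt)
    (hreach : TSReachable G Ds Dt) :
    TSReachable G (replaceVertex Ds u v) (replaceVertex Dt u v) := by
  clear hDs hDt
  induction hreach with
  | refl => exact Relation.ReflTransGen.refl
  | tail hst hstep ih =>
    obtain ⟨hd1, hd2, hslide⟩ := hstep
    rcases replace_slide h hslide with heq | hts
    · rw [heq] at ih; exact ih
    · exact Relation.ReflTransGen.tail ih ⟨dom_replace G u v h hd1, dom_replace G u v h hd2, hts⟩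
end

section
/- For every integer k ≥ 1, a multiset D of vertices of the cycle C_{3k} of cardinality k is a dominating multiset if and only if D is (as a multiset, i.e., with all multiplicities equal to 1) one of the three sets D_r = { i ∈ ℤ/3kℤ : i ≡ r (mod 3) } for r ∈ {0, 1, 2}. In particular, C_{3k} has exactly three dominating multisets of size k. -/
/-- The cycle graph `C_n` on vertex set `ℤ/nℤ`: `i` and `j` are adjacent
iff `i - j ≡ ±1 (mod n)`. -/
def cycleGraph (n : ℕ) : SimpleGraph (ZMod n) where
  Adj i j := i ≠ j ∧ (i - j = 1 ∨ j - i = 1)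
  symm := by
    constructor
    intro i j hij
    exact ⟨hij.1.symm, hij.2.symm⟩
  loopless := by
    constructor
    intro i hi
    exact hi.1 rfl

/-- The set `D_r = { i ∈ ℤ/3kℤ : i ≡ r (mod 3) }`, as a multiset. -/
def Dres (k r : ℕ) [NeZero (3 * k)] : Multiset (ZMod (3 * k)) :=
  (Finset.univ.filter fun i : ZMod (3 * k) => i.val % 3 = r).val

noncomputable def rho (k : ℕ) : ZMod (3*k) →+* ZMod 3 := ZMod.castHom (dvd_mul_right 3 k) (ZMod 3)

lemma rho_val (k : ℕ) [NeZero (3*k)] (i : ZMod (3*k)) : (rho k i).val = i.val % 3 := by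
  rw [rho, ZMod.castHom_apply, ← ZMod.natCast_val, ZMod.val_natCast]

lemma mem_Dres (k r : ℕ) [NeZero (3*k)] (i : ZMod (3*k)) : i ∈ Dres k r ↔ i.val % 3 = r := by
  simp [Dres]

lemma card_Dres (k r : ℕ) [NeZero (3*k)] (hk : 1 ≤ k) (hr : r < 3) :
    Multiset.card (Dres k r) = k := by
  have hlt : ∀ a : ZMod (3*k), a.val < 3*k := fun a => ZMod.val_lt a
  show (Finset.univ.filter fun i : ZMod (3 * k) => i.val % 3 = r).card = k
  have hb := Finset.card_bij'
    (s := Finset.univ.filter fun i : ZMod (3 * k) => i.val % 3 = r)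
    (t := (Finset.univ : Finset (Fin k)))
    (fun a ha => ⟨a.val / 3, by
      have h1 := hlt a
      have h2 : a.val % 3 = r := (Finset.mem_filter.1 ha).2
      omega⟩)
    (fun b _ => ((3*b.1 + r : ℕ) : ZMod (3*k)))
    (fun a ha => Finset.mem_univ _)
    (fun b _ => by
      rw [Finset.mem_filter]
      refine ⟨Finset.mem_univ _, ?_⟩
      rw [ZMod.val_natCast]
      have hb1 : b.1 < k := b.2
      have h2 : (3*b.1 + r) % (3*k) = 3*b.1 + r := Nat.mod_eq_of_lt (by omega)
      omega)
    (fun a ha => by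
      have h2 : a.val % 3 = r := (Finset.mem_filter.1 ha).2
      have h1 : 3 * (a.val / 3) + r = a.val := by omega
      show ((3 * (a.val / 3) + r : ℕ) : ZMod (3*k)) = a
      rw [h1, ZMod.natCast_val, ZMod.cast_id])
    (fun b _ => by
      ext
      show ((3*b.1 + r : ℕ) : ZMod (3*k)).val / 3 = b.1
      rw [ZMod.val_natCast]
      have hb1 : b.1 < k := b.2
      have h2 : (3*b.1 + r) % (3*k) = 3*b.1 + r := Nat.mod_eq_of_lt (by omega)
      omega)
  simpa using hb

lemma Dres_ne (k : ℕ) [NeZero (3*k)] (hk : 1 ≤ k) (r r' : ℕ) (hr : r < 3) (hr' : r' < 3)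
    (hne : r ≠ r') : Dres k r ≠ Dres k r' := by
  intro h
  have hval : ((r : ℕ) : ZMod (3*k)).val = r := by
    rw [ZMod.val_natCast]; exact Nat.mod_eq_of_lt (by omega)
  have hx : ((r : ℕ) : ZMod (3*k)) ∈ Dres k r := by rw [mem_Dres, hval]; omega
  rw [h, mem_Dres, hval] at hx
  omega

lemma cyc_one_ne_zero (k : ℕ) : (1 : ZMod (3*k)) ≠ 0 := by
  intro h
  have : (1 : ZMod 3) = 0 := by
    have := congrArg (rho k) h
    simpa using this
  exact one_ne_zero this

lemma cyc_two_ne_zero (k : ℕ) : (2 : ZMod (3*k)) ≠ 0 := by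
  intro h
  have e : rho k (2 : ZMod (3*k)) = (2 : ZMod 3) := by
    have h11 : (2 : ZMod (3*k)) = 1 + 1 := by norm_num
    rw [h11, map_add, map_one]; decide
  have h2 : (2 : ZMod 3) = 0 := by rw [← e, h, map_zero]
  revert h2; decide

lemma mem_Dres_rho (k r : ℕ) [NeZero (3*k)] (hr : r < 3) (i : ZMod (3*k)) :
    i ∈ Dres k r ↔ rho k i = (r : ZMod 3) := by
  rw [mem_Dres, ← rho_val]
  constructor
  · intro h
    have : ((r : ℕ) : ZMod 3).val = r := by rw [ZMod.val_natCast]; omega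
    exact ZMod.val_injective _ (by rw [h, this])
  · intro h
    rw [h, ZMod.val_natCast]; omega

lemma Dres_dominating (k r : ℕ) [NeZero (3*k)] (hr : r < 3) :
    IsDominatingMultiset (cycleGraph (3*k)) (Dres k r) := by
  intro w
  have h3 : ∀ x : ZMod 3, x = 0 ∨ x = 1 ∨ x = 2 := by decide
  rcases h3 ((r : ZMod 3) - rho k w) with hc | hc | hc
  · left
    rw [mem_Dres_rho k r hr]
    rw [sub_eq_zero] at hc
    exact hc.symm
  · right
    refine ⟨w + 1, ?_, ?_, Or.inl (by ring)⟩
    · rw [mem_Dres_rho k r hr, map_add, map_one]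
      have : ∀ x y : ZMod 3, y - x = 1 → x + 1 = y := by decide
      exact this _ _ hc
    · intro h
      exact cyc_one_ne_zero k (left_eq_add.1 h.symm)
  · right
    refine ⟨w - 1, ?_, ?_, Or.inr (by ring)⟩
    · rw [mem_Dres_rho k r hr, map_sub, map_one]
      have : ∀ x y : ZMod 3, y - x = 2 → x - 1 = y := by decide
      exact this _ _ hc
    · intro h
      rw [sub_eq_self] at h
      exact cyc_one_ne_zero k h

lemma forward_dir (k : ℕ) (hk : 1 ≤ k) [NeZero (3*k)] (D : Multiset (ZMod (3*k)))
    (hcard : Multiset.card D = k) (hdom : IsDominatingMultiset (cycleGraph (3*k)) D) :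
    ∃ r : ℕ, r < 3 ∧ D = Dres k r := by
  classical
  set ball : ZMod (3*k) → Multiset (ZMod (3*k)) := fun u => {u-1, u, u+1} with hball
  set N := D.bind ball with hN
  have hballmem : ∀ u w, w ∈ ball u ↔ w = u - 1 ∨ w = u ∨ w = u + 1 := by
    intro u w
    simp [hball]
  have hNcard : Multiset.card N = 3 * k := by
    rw [hN, Multiset.card_bind]
    have : Multiset.map (Multiset.card ∘ ball) D = Multiset.map (fun _ => 3) D := by
      apply Multiset.map_congr rfl
      intro x _
      simp [hball]
    rw [this, Multiset.map_const', Multiset.sum_replicate, hcard, smul_eq_mul]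
    ring
  have hmemN : ∀ w, w ∈ N := by
    intro w
    rcases hdom w with h | ⟨u, hu, hne, hadj⟩
    · exact Multiset.mem_bind.2 ⟨w, h, by rw [hballmem]; tauto⟩
    · refine Multiset.mem_bind.2 ⟨u, hu, ?_⟩
      rw [hballmem]
      rcases hadj with h1 | h1
      · left; rw [← h1]; ring
      · right; right; rw [← h1]; ring
  have hNuniv : N = (Finset.univ : Finset (ZMod (3*k))).val := by
    symm
    apply Multiset.eq_of_le_of_card_le
    · rw [Multiset.le_iff_count]
      intro a
      have h1 : Multiset.count a (Finset.univ : Finset (ZMod (3*k))).val = 1 :=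
        Multiset.count_eq_one_of_mem Finset.univ.nodup (Finset.mem_univ a)
      rw [h1]
      exact Multiset.one_le_count_iff_mem.2 (hmemN a)
    · rw [hNcard]
      have : Multiset.card (Finset.univ : Finset (ZMod (3*k))).val
          = Fintype.card (ZMod (3*k)) := rfl
      rw [this, ZMod.card]
  have hcount1 : ∀ w, Multiset.count w N = 1 := by
    intro w
    rw [hNuniv]
    exact Multiset.count_eq_one_of_mem Finset.univ.nodup (Finset.mem_univ w)
  -- key double counting
  have key : ∀ u v w : ZMod (3*k), ({u, v} : Multiset _) ≤ D →
      w ∈ ball u → w ∈ ball v → False := by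
    intro u v w hS hwu hwv
    have h1 : ((({u,v} : Multiset _)).map fun b => Multiset.count w (ball b)).sum
        ≤ ((D.map fun b => Multiset.count w (ball b))).sum := by
      obtain ⟨t, ht⟩ := Multiset.le_iff_exists_add.1 (Multiset.map_le_map hS
        (f := fun b => Multiset.count w (ball b)))
      rw [ht, Multiset.sum_add]
      exact Nat.le_add_right _ _
    have h2 : ((({u,v} : Multiset _)).map fun b => Multiset.count w (ball b)).sum
        = Multiset.count w (ball u) + Multiset.count w (ball v) := by
      simp
    have hcu := Multiset.one_le_count_iff_mem.2 hwu
    have hcv := Multiset.one_le_count_iff_mem.2 hwv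
    have hc := hcount1 w
    rw [hN, Multiset.count_bind] at hc
    omega
  have hpair : ∀ u v : ZMod (3*k), u ∈ D → v ∈ D → u ≠ v → ({u, v} : Multiset _) ≤ D := by
    intro u v hu hv huv
    rw [Multiset.le_iff_count]
    intro a
    have hcnt : Multiset.count a ({u, v} : Multiset _)
        = (if a = u then 1 else 0) + (if a = v then 1 else 0) := by
      rw [Multiset.insert_eq_cons, Multiset.count_cons, Multiset.count_singleton]
      split <;> split <;> omega
    rw [hcnt]
    split_ifs with h1 h2 h2
    · exact (huv (h1.symm.trans h2)).elim
    · subst h1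
      have := Multiset.one_le_count_iff_mem.2 hu
      omega
    · subst h2
      have := Multiset.one_le_count_iff_mem.2 hv
      omega
    · omega
  have hnodup : D.Nodup := by
    rw [Multiset.nodup_iff_count_le_one]
    intro a
    by_contra h
    push_neg at h
    have hS : ({a, a} : Multiset _) ≤ D := by
      rw [Multiset.le_iff_count]
      intro b
      rcases eq_or_ne b a with rfl | h1
      · have hcnt : Multiset.count b ({b, b} : Multiset _) = 2 := by
          rw [Multiset.insert_eq_cons, Multiset.count_cons_self, Multiset.count_singleton,
            if_pos rfl]
        omega
      · have hcnt : Multiset.count b ({a, a} : Multiset _) = 0 := by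
          rw [Multiset.insert_eq_cons, Multiset.count_cons_of_ne h1,
            Multiset.count_singleton, if_neg h1]
        omega
    exact key a a a hS (by rw [hballmem]; tauto) (by rw [hballmem]; tauto)
  have hstep : ∀ u ∈ D, u + 3 ∈ D := by
    intro u hu
    obtain ⟨v, hv, hwv⟩ := Multiset.mem_bind.1 (hmemN (u + 2))
    rw [hballmem] at hwv
    rcases hwv with h1 | h1 | h1
    · -- v = u + 3
      have hv3 : v = u + 3 := by
        have : u + 2 + 1 = v := by rw [h1]; ring
        rw [← this]; ring
      rwa [← hv3]
    · -- v = u + 2, contradiction via w' = u + 1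
      exfalso
      have huv : u ≠ v := by
        rw [← h1]
        intro h
        exact cyc_two_ne_zero k (left_eq_add.1 h)
      refine key u v (u+1) (hpair u v hu hv huv) (by rw [hballmem]; tauto) ?_
      rw [hballmem]
      left
      rw [← h1]; ring
    · -- v = u + 1, contradiction via w' = u + 1
      exfalso
      have hv1 : v = u + 1 := by
        have : u + 2 - 1 = v := by rw [h1]; ring
        rw [← this]; ring
      have huv : u ≠ v := by
        rw [hv1]
        intro h
        exact cyc_one_ne_zero k (left_eq_add.1 h)
      refine key u v (u+1) (hpair u v hu hv huv) (by rw [hballmem]; tauto) ?_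
      rw [hballmem]
      right; left
      exact hv1.symm
  have hiter : ∀ u ∈ D, ∀ n : ℕ, u + ((3*n : ℕ) : ZMod (3*k)) ∈ D := by
    intro u hu n
    induction n with
    | zero => simpa using hu
    | succ m ih =>
      have : u + ((3*(m+1) : ℕ) : ZMod (3*k)) = (u + ((3*m : ℕ) : ZMod (3*k))) + 3 := by
        push_cast
        ring
      rw [this]
      exact hstep _ ih
  -- pick an element of D
  obtain ⟨u, hu⟩ := Multiset.card_pos_iff_exists_mem.1 (by omega : 0 < Multiset.card D)
  refine ⟨u.val % 3, Nat.mod_lt _ (by omega), ?_⟩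
  have hsub : ∀ i : ZMod (3*k), i.val % 3 = u.val % 3 → i ∈ D := by
    intro i hi
    have him : i = u + (((i - u).val : ℕ) : ZMod (3*k)) := by
      rw [ZMod.natCast_val, ZMod.cast_id]
      ring
    have h3 : 3 ∣ (i - u).val := by
      have hr : (rho k (i - u)).val = 0 := by
        rw [map_sub]
        have : rho k i = rho k u := ZMod.val_injective _ (by rw [rho_val, rho_val, hi])
        rw [this, sub_self, ZMod.val_zero]
      rw [rho_val] at hr
      omega
    obtain ⟨t, ht⟩ := h3
    rw [him, ht]
    exact hiter u hu t
  -- conclude D = Dres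
  have hDfin : D.toFinset = Finset.univ.filter fun i : ZMod (3*k) => i.val % 3 = u.val % 3 := by
    symm
    apply Finset.eq_of_subset_of_card_le
    · intro i hi
      rw [Multiset.mem_toFinset]
      exact hsub i (Finset.mem_filter.1 hi).2
    · have h1 : D.toFinset.card = k := by
        rw [Multiset.card_toFinset, hnodup.dedup, hcard]
      have h2 : (Finset.univ.filter fun i : ZMod (3*k) => i.val % 3 = u.val % 3).card = k := by
        have := card_Dres k (u.val % 3) hk (Nat.mod_lt _ (by omega))
        exact this
      omega
  have : D.toFinset.val = D := by rw [Multiset.toFinset_val, hnodup.dedup]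
  rw [← this, hDfin]
  rfl


/-- A multiset of `k` vertices of `C_{3k}` is dominating iff it is one of the three
sets `D_r = { i : i ≡ r (mod 3) }` for `r ∈ {0,1,2}`; these three sets have size `k`
and are pairwise distinct, so `C_{3k}` has exactly three dominating multisets of size `k`. -/
theorem cycle_dominating_multisets (k : ℕ) (hk : 1 ≤ k) [NeZero (3 * k)] :
    (∀ D : Multiset (ZMod (3 * k)), Multiset.card D = k →
      (IsDominatingMultiset (cycleGraph (3 * k)) D ↔ ∃ r : ℕ, r < 3 ∧ D = Dres k r)) ∧
    (∀ r : ℕ, r < 3 → Multiset.card (Dres k r) = k) ∧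
    (∀ r r' : ℕ, r < 3 → r' < 3 → r ≠ r' → Dres k r ≠ Dres k r') := by
  refine ⟨fun D hD => ⟨fun hdom => forward_dir k hk D hD hdom, ?_⟩,
    fun r hr => card_Dres k r hk hr,
    fun r r' hr hr' hne => Dres_ne k hk r r' hr hr' hne⟩
  rintro ⟨r, hr, rfl⟩
  exact Dres_dominating k r hr
end

section
/- Let G be a finite simple graph containing a vertex v that is adjacent to every other vertex of G (so the single vertex v dominates G). Then for any two dominating multisets D_s and D_t of G with |D_s| = |D_t|, the multiset D_t is TS-reachable from D_s. -/
lemma TSStep.symm' {V : Type*} [DecidableEq V] {G : SimpleGraph V} {D D' : Multiset V}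
    (h : TSStep G D D') : TSStep G D' D := by
  obtain ⟨hD, hD', u, w, hadj, hu, heq⟩ := h
  refine ⟨hD', hD, w, u, hadj.symm, ?_, ?_⟩
  · rw [heq]; exact Multiset.mem_cons_self _ _
  · rw [heq, Multiset.erase_cons_head, Multiset.cons_erase hu]

lemma TSReachable.symm' {V : Type*} [DecidableEq V] {G : SimpleGraph V} {D D' : Multiset V}
    (h : TSReachable G D D') : TSReachable G D' D :=
  by
  unfold TSReachable at h ⊢
  induction h with
  | refl => exact Relation.ReflTransGen.refl
  | tail _ hs ih => exact Relation.ReflTransGen.head (TSStep.symm' hs) ih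

lemma to_replicate {V : Type*} [DecidableEq V] (G : SimpleGraph V) (v : V)
    (hv : ∀ w : V, w ≠ v → G.Adj v w) :
    ∀ n (D : Multiset V), (D.filter (· ≠ v)).card = n → IsDominatingMultiset G D →
      TSReachable G D (Multiset.replicate (Multiset.card D) v) := by
  intro n
  induction n with
  | zero =>
    intro D hD _
    have : D = Multiset.replicate (Multiset.card D) v := by
      rw [Multiset.eq_replicate_card]
      intro b hb
      by_contra hne
      have : b ∈ D.filter (· ≠ v) := Multiset.mem_filter.2 ⟨hb, hne⟩
      rw [Multiset.card_eq_zero.1 hD] at this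
      exact absurd this (Multiset.notMem_zero b)
    rw [← this]
    exact Relation.ReflTransGen.refl
  | succ n ih =>
    intro D hD hdom
    have hne : D.filter (· ≠ v) ≠ 0 := by
      intro h; rw [h] at hD; simp at hD
    obtain ⟨u, hu⟩ := Multiset.exists_mem_of_ne_zero hne
    have huD : u ∈ D := (Multiset.mem_filter.1 hu).1
    have huv : u ≠ v := (Multiset.mem_filter.1 hu).2
    set D' : Multiset V := v ::ₘ D.erase u with hD'def
    have hdom' : IsDominatingMultiset G D' := by
      intro w
      by_cases hw : w = v
      · left; rw [hw]; exact Multiset.mem_cons_self _ _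
      · right; exact ⟨v, Multiset.mem_cons_self _ _, hv w hw⟩
    have hstep : TSStep G D D' :=
      ⟨hdom, hdom', u, v, (hv u huv).symm, huD, rfl⟩
    have hcard' : Multiset.card D' = Multiset.card D := by
      rw [hD'def, Multiset.card_cons, Multiset.card_erase_of_mem huD]
      have : 0 < Multiset.card D := Multiset.card_pos_iff_exists_mem.2 ⟨u, huD⟩
      exact Nat.succ_pred_eq_of_pos this
    have hfilt : (D'.filter (· ≠ v)).card = n := by
      have h1 : D'.filter (· ≠ v) = (D.erase u).filter (· ≠ v) := by
        rw [hD'def, Multiset.filter_cons_of_neg]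
        simp
      have h3 : Multiset.filter (· ≠ v) D = u ::ₘ Multiset.filter (· ≠ v) (D.erase u) := by
        conv_lhs => rw [← Multiset.cons_erase huD]
        exact Multiset.filter_cons_of_pos _ huv
      rw [h1]
      rw [h3, Multiset.card_cons] at hD
      omega
    have := ih D' hfilt hdom'
    rw [hcard'] at this
    exact Relation.ReflTransGen.head hstep this

/-- If `G` has a vertex adjacent to every other vertex, then any two dominating
multisets of `G` of the same size are TS-reachable from one another. -/
theorem universal_vertex_TSReachable {V : Type*} [Fintype V] [DecidableEq V]
    (G : SimpleGraph V) (v : V) (hv : ∀ w : V, w ≠ v → G.Adj v w)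
    (Ds Dt : Multiset V)
    (hDs : IsDominatingMultiset G Ds) (hDt : IsDominatingMultiset G Dt)
    (hcard : Multiset.card Ds = Multiset.card Dt) :
    TSReachable G Ds Dt := by
  have h1 := to_replicate G v hv _ Ds rfl hDs
  have h2 := to_replicate G v hv _ Dt rfl hDt
  rw [hcard] at h1
  exact h1.trans h2.symm'
end

section
/- Let G be a connected finite simple graph, let D be a dominating multiset of G, and let x be a vertex occurring in D such that the multiset D − x obtained by removing one copy of x from D is still a dominating multiset of G. Then for every vertex y of G, the multiset (D − x) + y (remove one copy of x and add one copy of y) is TS-reachable from D. -/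
/-- In a connected graph, if a token on `x` can be removed from a dominating multiset `D`
while keeping domination, then it can be moved to any vertex `y`: the multiset obtained
from `D` by removing a copy of `x` and adding a copy of `y` is TS-reachable from `D`. -/
theorem TSReachable_move_redundant_token {V : Type*} [Fintype V] [DecidableEq V]
    (G : SimpleGraph V) (hconn : G.Connected)
    (D : Multiset V) (hD : IsDominatingMultiset G D)
    (x : V) (hx : x ∈ D) (hDx : IsDominatingMultiset G (D.erase x))
    (y : V) :
    TSReachable G D (y ::ₘ D.erase x) := by

  have hdom : ∀ z : V, IsDominatingMultiset G (z ::ₘ D.erase x) := by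
    intro z w
    rcases hDx w with h | ⟨u, hu, hadj⟩
    · exact Or.inl (Multiset.mem_cons_of_mem h)
    · exact Or.inr ⟨u, Multiset.mem_cons_of_mem hu, hadj⟩
  have hxy : Relation.ReflTransGen G.Adj x y :=
    (SimpleGraph.reachable_iff_reflTransGen (G := G) (u := x) (v := y)).mp (hconn.preconnected x y)
  have key : Relation.ReflTransGen (TSStep G) (x ::ₘ D.erase x) (y ::ₘ D.erase x) := by
    induction hxy with
    | refl => exact Relation.ReflTransGen.refl
    | tail _ hadj ih =>
      refine ih.tail ⟨hdom _, hdom _, _, _, hadj, Multiset.mem_cons_self _ _, ?_⟩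
      rw [Multiset.erase_cons_head]
  rwa [Multiset.cons_erase hx] at key
end
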